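/- Let P be an orthogonal projection and U a unitary operator on a Hilbert space F. Then for every η on the unit circle, Re(η(P^⊥U + U*P)) ≤ I, where P^⊥ = I - P. Consequently ν(P^⊥U + U*P) ≤ 1. -/

import Mathlib

open ContinuousLinearMap

noncomputable def numRadius {F : Type*} [NormedAddCommGroup F] [InnerProductSpace ℂ F]
    (A : F →L[ℂ] F) : ℝ :=
  sSup {r : ℝ | ∃ h : F, ‖h‖ = 1 ∧ r = ‖(inner ℂ (A h) h : ℂ)‖}

noncomputable def reOp {F : Type*} [NormedAddCommGroup F] [InnerProductSpace ℂ F]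
    [CompleteSpace F] (A : F →L[ℂ] F) : F →L[ℂ] F :=
  (2 : ℂ)⁻¹ • (A + adjoint A)

set_option maxHeartbeats 1000000 in
/-- For an orthogonal projection `P` and a unitary `U` on a Hilbert space `F`,
`Re(η(P^⊥U + U*P)) ≤ I` for every unimodular `η`; consequently `ν(P^⊥U + U*P) ≤ 1`. -/
theorem re_le_one_and_numRadius_le_one {F : Type*} [NormedAddCommGroup F]
    [InnerProductSpace ℂ F] [CompleteSpace F]
    (P U : F →L[ℂ] F) (hP : IsSelfAdjoint P) (hP2 : P ∘L P = P)
    (hU1 : adjoint U ∘L U = 1) (hU2 : U ∘L adjoint U = 1) :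
    (∀ η : ℂ, ‖η‖ = 1 →
      ((1 : F →L[ℂ] F) - reOp (η • (((1 - P) ∘L U) + (adjoint U ∘L P)))).IsPositive) ∧
    numRadius (((1 - P) ∘L U) + (adjoint U ∘L P)) ≤ 1 := by
  set Q : F →L[ℂ] F := 1 - P with hQdef
  set A : F →L[ℂ] F := (Q ∘L U) + (adjoint U ∘L P) with hAdef
  have hPs : star P = P := hP.star_eq
  have hUs : star U * U = 1 := by
    rw [← mul_def] at hU1; rw [star_eq_adjoint]; exact hU1
  have hPP : P * P = P := by rw [← mul_def] at hP2; exact hP2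
  have hQP : Q * P = 0 := by rw [hQdef]; rw [sub_mul, one_mul, hPP, sub_self]
  have hPQ : P * Q = 0 := by rw [hQdef]; rw [mul_sub, mul_one, hPP, sub_self]
  have hQQ : Q * Q = Q := by rw [hQdef, sub_mul, one_mul, mul_sub, mul_one, hPP]; abel
  have hQs : star Q = Q := by rw [hQdef, star_sub, star_one, hPs]
  have key : ∀ η : ℂ, ‖η‖ = 1 →
      ((1 : F →L[ℂ] F) - reOp (η • A)).IsPositive := by
    intro η hη
    have hη1 : η * (starRingEnd ℂ) η = 1 := by
      rw [RCLike.mul_conj]; norm_cast; rw [hη]; norm_num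
    have hη2 : (starRingEnd ℂ) η * η = 1 := by rw [mul_comm]; exact hη1
    set V : F →L[ℂ] F := (η • Q + (starRingEnd ℂ) η • P) * U with hVdef
    have hVs : star V = star U * ((starRingEnd ℂ) η • Q + η • P) := by
      rw [hVdef]
      simp [star_add, star_smul, hQs, hPs, star_mul, Complex.star_def]
    have hVV : star V * V = 1 := by
      rw [hVs, hVdef]
      have hmid : ((starRingEnd ℂ) η • Q + η • P) * (η • Q + (starRingEnd ℂ) η • P) = 1 := by
        simp only [add_mul, mul_add, smul_mul_assoc, mul_smul_comm, hQQ, hPP, hQP, hPQ,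
          smul_zero, add_zero, zero_add, smul_smul, hη1, hη2, one_smul]
        rw [hQdef]; abel
      rw [mul_assoc, ← mul_assoc ((starRingEnd ℂ) η • Q + η • P), hmid, one_mul, hUs]
    have hsum : η • A + adjoint (η • A) = V + adjoint V := by
      rw [← star_eq_adjoint, ← star_eq_adjoint, hVs, hVdef, hAdef]
      simp only [← mul_def, ← star_eq_adjoint, star_smul, star_add, star_mul, hQs, hPs,
        star_star, Complex.star_def, smul_add, add_mul, mul_add, smul_mul_assoc, mul_smul_comm]
      abel
    have hre : reOp (η • A) = (2 : ℂ)⁻¹ • (V + adjoint V) := by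
      rw [reOp, hsum]
    rw [hre]
    constructor
    · rw [← ContinuousLinearMap.isSelfAdjoint_iff_isSymmetric]; unfold IsSelfAdjoint; rw [star_sub, star_one, star_smul, star_add, star_eq_adjoint,
        star_eq_adjoint, adjoint_adjoint]
      congr 1
      rw [add_comm]
      congr 1
      simp [Complex.star_def]
    · intro x
      rw [reApplyInnerSelf_apply]
      have h1 : ((1 : F →L[ℂ] F) - (2:ℂ)⁻¹ • (V + adjoint V)) x
          = x - (2:ℂ)⁻¹ • (V x + adjoint V x) := by simp
      rw [h1, inner_sub_left, inner_smul_left, inner_add_left, adjoint_inner_left]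
      have h2 : (inner ℂ x (V x) : ℂ) = (starRingEnd ℂ) (inner ℂ (V x) x) :=
        (inner_conj_symm (𝕜 := ℂ) x (V x)).symm
      rw [h2, Complex.add_conj]
      have h3 : (starRingEnd ℂ) (2:ℂ)⁻¹ * ((2 * Complex.re (inner ℂ (V x) x) : ℝ) : ℂ)
          = (Complex.re (inner ℂ (V x) x) : ℂ) := by
        rw [map_inv₀, Complex.conj_ofNat]
        push_cast
        ring
      rw [h3]
      have hVx : ‖V x‖ = ‖x‖ := by
        have hi : (inner ℂ (V x) (V x) : ℂ) = inner ℂ x x := by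
          rw [← adjoint_inner_right, ← star_eq_adjoint, ← comp_apply, ← mul_def, hVV, ContinuousLinearMap.one_apply]
        have h4 : ‖V x‖^2 = ‖x‖^2 := by
          have h4' := congrArg (RCLike.re (K := ℂ)) hi
          rwa [inner_self_eq_norm_sq, inner_self_eq_norm_sq] at h4'
        nlinarith [norm_nonneg (V x), norm_nonneg x]
      have h5 : Complex.re (inner ℂ (V x) x) ≤ ‖x‖^2 := by
        calc Complex.re (inner ℂ (V x) x) ≤ ‖(inner ℂ (V x) x : ℂ)‖ := Complex.re_le_norm _
          _ ≤ ‖V x‖ * ‖x‖ := norm_inner_le_norm _ _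
          _ = ‖x‖^2 := by rw [hVx]; ring
      have h6 : RCLike.re (inner ℂ x x : ℂ) = ‖x‖^2 := inner_self_eq_norm_sq x
      simp only [map_sub, RCLike.ofReal_re, h6]
      have h5' : RCLike.re ((Complex.re (inner ℂ (V x) x) : ℂ)) = Complex.re (inner ℂ (V x) x) :=
        RCLike.ofReal_re _
      rw [h5']
      linarith
  have bound : ∀ η : ℂ, ‖η‖ = 1 → ∀ h : F, ‖h‖ = 1 →
      Complex.re ((starRingEnd ℂ) η * (inner ℂ (A h) h : ℂ)) ≤ 1 := by
    intro η hη h hh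
    have hpos := (key η hη).2 h
    rw [reApplyInnerSelf_apply] at hpos
    have e1 : ((1 : F →L[ℂ] F) - reOp (η • A)) h
        = h - (2:ℂ)⁻¹ • ((η • A) h + adjoint (η • A) h) := by
      rw [reOp]
      simp only [sub_apply, ContinuousLinearMap.one_apply, smul_apply, add_apply]
    rw [e1, inner_sub_left, inner_smul_left, inner_add_left, adjoint_inner_left,
      smul_apply, inner_smul_left, inner_smul_right] at hpos
    set z : ℂ := (inner ℂ (A h) h : ℂ) with hzdef
    have e2 : (inner ℂ h (A h) : ℂ) = (starRingEnd ℂ) z := by rw [hzdef, inner_conj_symm]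
    rw [e2] at hpos
    have e3 : η * (starRingEnd ℂ) z = (starRingEnd ℂ) ((starRingEnd ℂ) η * z) := by
      rw [map_mul, Complex.conj_conj]
    rw [e3, Complex.add_conj] at hpos
    have e4 : (starRingEnd ℂ) (2:ℂ)⁻¹ * ((2 * Complex.re ((starRingEnd ℂ) η * z) : ℝ) : ℂ)
        = ((Complex.re ((starRingEnd ℂ) η * z) : ℝ) : ℂ) := by
      rw [map_inv₀, Complex.conj_ofNat]
      push_cast
      ring
    rw [e4] at hpos
    have e5 : RCLike.re (inner ℂ h h : ℂ) = 1 := by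
      rw [inner_self_eq_norm_sq, hh]; norm_num
    simp only [map_sub, e5, RCLike.re_to_complex, Complex.ofReal_re] at hpos
    linarith
  refine ⟨key, ?_⟩
  rw [numRadius]
  apply Real.sSup_le
  · rintro r ⟨h, hh, rfl⟩
    set z : ℂ := (inner ℂ (A h) h : ℂ) with hzdef
    by_cases hz : z = 0
    · rw [hz]; norm_num
    · set η : ℂ := z / (‖z‖ : ℂ) with hηdef
      have hz' : ‖z‖ ≠ 0 := norm_ne_zero_iff.mpr hz
      have hηn : ‖η‖ = 1 := by
        rw [hηdef, norm_div, Complex.norm_real, Real.norm_eq_abs,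
          abs_of_nonneg (norm_nonneg z), div_self hz']
      have hb := bound η hηn h hh
      have hw : (starRingEnd ℂ) η * z = ((‖z‖ : ℝ) : ℂ) := by
        rw [hηdef, map_div₀, Complex.conj_ofReal, div_mul_eq_mul_div, RCLike.conj_mul]
        rw [pow_two]
        push_cast
        have hzc : ((‖z‖ : ℝ) : ℂ) ≠ 0 := by exact_mod_cast hz'
        field_simp
        rfl
      rw [← hzdef, hw, Complex.ofReal_re] at hb
      exact hb
  · exact zero_le_one
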